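/- For every natural number p ≥ 2, (p+1) · ∫₀¹ t^((p−1)/2) · |−p + (p+2)·t| dt = (p+1) · ( (8(p+2)/((p+1)(p+3)))·(p/(p+2))^((p+3)/2) + 4/(p+1) − 4(p+2)/((p+1)(p+3)) ). -/

import Mathlib

theorem stmt_12 (p : ℕ) (hp : 2 ≤ p) :
    ((p : ℝ) + 1) * ∫ t in (0:ℝ)..1, t ^ (((p : ℝ) - 1) / 2) * |-(p : ℝ) + ((p : ℝ) + 2) * t| =
    ((p : ℝ) + 1) * (8 * ((p : ℝ) + 2) / (((p : ℝ) + 1) * ((p : ℝ) + 3)) *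
        ((p : ℝ) / ((p : ℝ) + 2)) ^ (((p : ℝ) + 3) / 2) +
      4 / ((p : ℝ) + 1) - 4 * ((p : ℝ) + 2) / (((p : ℝ) + 1) * ((p : ℝ) + 3))) := by
  have hc : (2:ℝ) ≤ (p:ℝ) := by exact_mod_cast hp
  set c := (p:ℝ) with hcdef
  have hc0 : 0 < c := by linarith
  have hc1 : (0:ℝ) < c + 1 := by linarith
  have hc2 : (0:ℝ) < c + 2 := by linarith
  have hc3 : (0:ℝ) < c + 3 := by linarith
  set t₀ : ℝ := c / (c + 2) with ht₀def
  have ht₀pos : 0 < t₀ := div_pos hc0 hc2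
  have ht₀lt : t₀ < 1 := (div_lt_one hc2).mpr (by linarith)
  have ht₀c : (c + 2) * t₀ = c := by
    rw [ht₀def, mul_comm, div_mul_cancel₀ c (ne_of_gt hc2)]
  set F : ℝ → ℝ := fun t => -2*c/(c+1) * t ^ ((c+1)/2) + 2*(c+2)/(c+3) * t ^ ((c+3)/2)
    with hF
  have hderiv : ∀ t : ℝ, 0 ≤ t →
      HasDerivAt F (t ^ ((c-1)/2) * (-c + (c+2)*t)) t := by
    intro t ht
    have h1 : HasDerivAt (fun x : ℝ => x ^ ((c+1)/2)) (((c+1)/2) * t ^ ((c+1)/2 - 1)) t :=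
      Real.hasDerivAt_rpow_const (Or.inr (by linarith))
    have h2 : HasDerivAt (fun x : ℝ => x ^ ((c+3)/2)) (((c+3)/2) * t ^ ((c+3)/2 - 1)) t :=
      Real.hasDerivAt_rpow_const (Or.inr (by linarith))
    have h := (h1.const_mul (-2*c/(c+1))).add (h2.const_mul (2*(c+2)/(c+3)))
    refine h.congr_deriv ?_
    have e1 : (c+1)/2 - 1 = (c-1)/2 := by ring
    have e2 : (c+3)/2 - 1 = (c+1)/2 := by ring
    rw [e1, e2]
    have e3 : t ^ ((c+1)/2) = t ^ ((c-1)/2) * t := by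
      rw [show (c+1)/2 = (c-1)/2 + 1 by ring]
      rcases eq_or_lt_of_le ht with h0 | h0
      · rw [← h0, Real.zero_rpow (by linarith : ((c-1)/2 : ℝ) ≠ 0)]
        rw [Real.zero_rpow (by linarith : ((c-1)/2 + 1 : ℝ) ≠ 0)]
        ring
      · rw [Real.rpow_add_one (ne_of_gt h0)]
    rw [e3]
    field_simp
  have hαnn : (0:ℝ) ≤ (c-1)/2 := by linarith
  -- integrability of the signed integrand and the abs integrand on any subinterval
  have hint : ∀ a b : ℝ, IntervalIntegrable
      (fun t => t ^ ((c-1)/2) * (-c + (c+2)*t)) MeasureTheory.volume a b := by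
    intro a b
    exact (intervalIntegral.intervalIntegrable_rpow (Or.inl hαnn)).mul_continuousOn
      (Continuous.continuousOn (by continuity))
  have hintabs : ∀ a b : ℝ, IntervalIntegrable
      (fun t => t ^ ((c-1)/2) * |-c + (c+2)*t|) MeasureTheory.volume a b := by
    intro a b
    exact (intervalIntegral.intervalIntegrable_rpow (Or.inl hαnn)).mul_continuousOn
      (Continuous.continuousOn (by continuity))
  have key1 : ∫ t in (0:ℝ)..t₀, t ^ ((c-1)/2) * (-c + (c+2)*t) = F t₀ - F 0 :=
    intervalIntegral.integral_eq_sub_of_hasDerivAt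
      (fun t htm => hderiv t (by
        rw [Set.uIcc_of_le (le_of_lt ht₀pos)] at htm; exact htm.1)) (hint 0 t₀)
  have key2 : ∫ t in t₀..(1:ℝ), t ^ ((c-1)/2) * (-c + (c+2)*t) = F 1 - F t₀ :=
    intervalIntegral.integral_eq_sub_of_hasDerivAt
      (fun t htm => hderiv t (by
        rw [Set.uIcc_of_le (le_of_lt ht₀lt)] at htm; exact le_trans (le_of_lt ht₀pos) htm.1))
      (hint t₀ 1)
  have habs1 : ∫ t in (0:ℝ)..t₀, t ^ ((c-1)/2) * |-c + (c+2)*t|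
      = -(F t₀ - F 0) := by
    rw [← key1, ← intervalIntegral.integral_neg]
    apply intervalIntegral.integral_congr
    intro t htm
    rw [Set.uIcc_of_le (le_of_lt ht₀pos)] at htm
    have : -c + (c+2)*t ≤ 0 := by
      have : (c+2)*t ≤ (c+2)*t₀ := by
        exact mul_le_mul_of_nonneg_left htm.2 (le_of_lt hc2)
      rw [ht₀c] at this; linarith
    simp only [abs_of_nonpos this]; ring
  have habs2 : ∫ t in t₀..(1:ℝ), t ^ ((c-1)/2) * |-c + (c+2)*t|
      = F 1 - F t₀ := by
    rw [← key2]
    apply intervalIntegral.integral_congr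
    intro t htm
    rw [Set.uIcc_of_le (le_of_lt ht₀lt)] at htm
    have : 0 ≤ -c + (c+2)*t := by
      have : (c+2)*t₀ ≤ (c+2)*t :=
        mul_le_mul_of_nonneg_left htm.1 (le_of_lt hc2)
      rw [ht₀c] at this; linarith
    simp only [abs_of_nonneg this]
  have hsplit : ∫ t in (0:ℝ)..1, t ^ ((c-1)/2) * |-c + (c+2)*t|
      = -(F t₀ - F 0) + (F 1 - F t₀) := by
    rw [← habs1, ← habs2]
    exact (intervalIntegral.integral_add_adjacent_intervals (hintabs 0 t₀) (hintabs t₀ 1)).symm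
  rw [hsplit]
  -- evaluate F
  have hF0 : F 0 = 0 := by
    simp only [hF]
    rw [Real.zero_rpow (by linarith : ((c+1)/2 : ℝ) ≠ 0),
      Real.zero_rpow (by linarith : ((c+3)/2 : ℝ) ≠ 0)]
    ring
  have hF1 : F 1 = -2*c/(c+1) + 2*(c+2)/(c+3) := by
    simp only [hF, Real.one_rpow]; ring
  set X : ℝ := t₀ ^ ((c+3)/2) with hX
  have hXsub : t₀ ^ ((c+1)/2) = X / t₀ := by
    rw [hX, show (c+3)/2 = (c+1)/2 + 1 by ring, Real.rpow_add_one (ne_of_gt ht₀pos)]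
    field_simp
  have hFt₀ : F t₀ = -2*c/(c+1) * (X / t₀) + 2*(c+2)/(c+3) * X := by
    simp only [hF, hXsub]
    rfl
  rw [hF0, hF1, hFt₀, ht₀def]
  field_simp
  ring
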